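/- For the BPSK error probability over L_fb-branch maximum ratio combining in Rayleigh fading, ε_fb(f) = ((1−ν)/2)^{L_fb} · Σ_{j=0}^{L_fb−1} C(L_fb−1+j, j)·((1+ν)/2)^j with ν = √(γ/(1+γ)) and γ = (f/L_fb)·SNR, ε_fb is a strictly decreasing function of f > 0 (for fixed SNR > 0 and integer L_fb ≥ 1), and ε_fb ∈ (0, 1/2) for all f, SNR > 0. -/

import Mathlib

open Real Finset

/-- BPSK error probability with `L`-branch maximum ratio combining in Rayleigh
fading, with `f` feedback symbols: `ν = √(γ/(1+γ))`, `γ = (f/L)·SNR`. -/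
noncomputable def epsFb (SNR : ℝ) (L : ℕ) (f : ℝ) : ℝ :=
  let γ : ℝ := (f / L) * SNR
  let ν : ℝ := Real.sqrt (γ / (1 + γ))
  ((1 - ν) / 2) ^ L *
    ∑ j ∈ Finset.range L, ((L - 1 + j).choose j : ℝ) * ((1 + ν) / 2) ^ j

/-- Auxiliary: the MRC error probability as a function of `ν`, with `L = K + 1`. -/
noncomputable def stmt17Faux (K : ℕ) (ν : ℝ) : ℝ :=
  ((1 - ν)/2)^(K+1) * ∑ j ∈ Finset.range (K+1), ((K + j).choose j : ℝ) * ((1 + ν)/2)^j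

lemma stmt17_key_ident (K : ℕ) (p : ℝ) : ∀ m : ℕ,
    (1 - p) * ∑ i ∈ Finset.range m, ((K + 1 + i).choose i : ℝ) * p ^ i
      = ∑ i ∈ Finset.range m, ((K + i).choose i : ℝ) * p ^ i
        - (((K + 1 + m).choose m : ℝ) - ((K + m).choose m : ℝ)) * p ^ m := by
  intro m
  induction m with
  | zero => simp
  | succ m ih =>
      rw [Finset.sum_range_succ, Finset.sum_range_succ, mul_add, ih]
      have h : (K + 1 + (m+1)).choose (m+1) = (K + m + 1).choose m + (K + m + 1).choose (m+1) := by
        rw [show K + 1 + (m+1) = (K + m + 1) + 1 from by ring, Nat.choose_succ_succ]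
      have h2 : ((K + 1 + (m+1)).choose (m+1) : ℝ)
          = ((K + m + 1).choose m : ℝ) + ((K + m + 1).choose (m+1) : ℝ) := by
        exact_mod_cast congrArg (Nat.cast : ℕ → ℝ) h
      rw [show K + (m+1) = K + m + 1 from by ring] at *
      rw [show K + 1 + m = K + m + 1 from by ring] at *
      rw [h2]
      ring

lemma stmt17_reindex (K : ℕ) (p : ℝ) :
    ∑ j ∈ Finset.range (K+1), ((K + j).choose j : ℝ) * ((j : ℝ) * p ^ (j - 1))
      = ((K : ℝ) + 1) * ∑ i ∈ Finset.range K, ((K + 1 + i).choose i : ℝ) * p ^ i := by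
  rw [Finset.sum_range_succ', Finset.mul_sum]
  simp only [Nat.cast_zero, zero_mul, mul_zero, add_zero]
  refine Finset.sum_congr rfl fun i _ => ?_
  have h : (K + 1 + i).choose (i+1) * (i+1) = (K + 1 + i).choose i * (K + 1) := by
    have := Nat.choose_succ_right_eq (K + 1 + i) i
    simpa [Nat.add_sub_cancel_left, show K + 1 + i - i = K + 1 from by omega] using this
  have h2 : (((K + 1 + i).choose (i+1) : ℝ)) * ((i:ℝ)+1) = ((K + 1 + i).choose i : ℝ) * ((K:ℝ) + 1) := by
    exact_mod_cast congrArg (Nat.cast : ℕ → ℝ) h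
  rw [show K + (i+1) = K + 1 + i from by ring]
  push_cast
  linear_combination p ^ i * h2

lemma stmt17_half_ident : ∀ n : ℕ, ∑ j ∈ Finset.range (n+1), ((n + j).choose j : ℝ) * (1/2) ^ j = 2 ^ n := by
  intro n
  induction n with
  | zero => simp
  | succ n ih =>
      have peel : ∑ j ∈ Finset.range (n+2), ((n + 1 + j).choose j : ℝ) * (1/2) ^ j
          = (∑ i ∈ Finset.range (n+1), ((n + 1 + (i+1)).choose (i+1) : ℝ) * (1/2) ^ (i+1)) + 1 := by
        rw [Finset.sum_range_succ']; norm_num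
      have pascal : ∀ i : ℕ, ((n + 1 + (i+1)).choose (i+1) : ℝ)
          = ((n + 1 + i).choose i : ℝ) + ((n + 1 + i).choose (i+1) : ℝ) := by
        intro i
        have : (n + 1 + (i+1)).choose (i+1) = (n + 1 + i).choose i + (n + 1 + i).choose (i+1) := by
          rw [show n + 1 + (i+1) = (n + 1 + i) + 1 from by ring, Nat.choose_succ_succ]
        exact_mod_cast congrArg (Nat.cast : ℕ → ℝ) this
      have split : ∑ i ∈ Finset.range (n+1), ((n + 1 + (i+1)).choose (i+1) : ℝ) * (1/2) ^ (i+1)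
          = (∑ i ∈ Finset.range (n+1), ((n + 1 + i).choose i : ℝ) * (1/2) ^ (i+1))
            + ∑ i ∈ Finset.range (n+1), ((n + 1 + i).choose (i+1) : ℝ) * (1/2) ^ (i+1) := by
        rw [← Finset.sum_add_distrib]
        exact Finset.sum_congr rfl fun i _ => by rw [pascal i]; ring
      have first : ∑ i ∈ Finset.range (n+1), ((n + 1 + i).choose i : ℝ) * (1/2) ^ (i+1)
          = (1/2) * ((∑ j ∈ Finset.range (n+2), ((n + 1 + j).choose j : ℝ) * (1/2) ^ j)
              - ((n + 1 + (n+1)).choose (n+1) : ℝ) * (1/2) ^ (n+1)) := by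
        rw [Finset.sum_range_succ (fun j => ((n + 1 + j).choose j : ℝ) * (1/2) ^ j) (n+1)]
        rw [add_sub_cancel_right, Finset.mul_sum]
        exact Finset.sum_congr rfl fun i _ => by ring
      have second : ∑ i ∈ Finset.range (n+1), ((n + 1 + i).choose (i+1) : ℝ) * (1/2) ^ (i+1)
          = (∑ j ∈ Finset.range (n+2), ((n + j).choose j : ℝ) * (1/2) ^ j) - 1 := by
        rw [Finset.sum_range_succ' (fun j => ((n + j).choose j : ℝ) * (1/2) ^ j) (n+1)]
        simp only [Nat.add_zero, Nat.choose_zero_right, Nat.cast_one, pow_zero, mul_one,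
          add_sub_cancel_right]
        exact Finset.sum_congr rfl fun i _ => by rw [show n + (i+1) = n + 1 + i from by ring]
      have ihext : ∑ j ∈ Finset.range (n+2), ((n + j).choose j : ℝ) * (1/2) ^ j
          = 2 ^ n + ((n + (n+1)).choose (n+1) : ℝ) * (1/2) ^ (n+1) := by
        rw [Finset.sum_range_succ, ih]
      have central : ((n + 1 + (n+1)).choose (n+1) : ℝ) = 2 * ((n + (n+1)).choose (n+1) : ℝ) := by
        have h1 : (n + 1 + (n+1)).choose (n+1) = (n + (n+1)).choose n + (n + (n+1)).choose (n+1) := by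
          rw [show n + 1 + (n+1) = (n + (n+1)) + 1 from by ring, Nat.choose_succ_succ]
        have h2 : (n + (n+1)).choose n = (n + (n+1)).choose (n+1) := by
          have := Nat.choose_symm (show n + 1 ≤ n + (n+1) by omega)
          simpa [show n + (n+1) - (n+1) = n from by omega] using this
        rw [h2] at h1
        push_cast [h1]; ring
      have eq1 : (∑ j ∈ Finset.range (n+2), ((n + 1 + j).choose j : ℝ) * (1/2) ^ j)
          = 1/2 * ((∑ j ∈ Finset.range (n+2), ((n + 1 + j).choose j : ℝ) * (1/2) ^ j)
              - ((n + 1 + (n+1)).choose (n+1) : ℝ) * (1/2) ^ (n+1))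
            + ((2 ^ n + ((n + (n+1)).choose (n+1) : ℝ) * (1/2) ^ (n+1)) - 1) + 1 := by
        conv_lhs => rw [peel, split, first, second, ihext]
      rw [central] at eq1
      have hp : (2:ℝ) ^ (n+1) = 2 ^ n * 2 := pow_succ 2 n
      show ∑ j ∈ Finset.range (n+2), ((n + 1 + j).choose j : ℝ) * (1/2) ^ j = 2 ^ (n+1)
      linarith [eq1]

lemma stmt17_hasDerivAt_F (K : ℕ) (ν : ℝ) :
    HasDerivAt (stmt17Faux K)
      (-(((K:ℝ)+1)/2) * ((1-ν)/2)^K * ((2*K+1).choose K : ℝ) * ((1+ν)/2)^K) ν := by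
  have hq : HasDerivAt (fun x : ℝ => (1 - x)/2) (-1/2 : ℝ) ν := by
    simpa using ((hasDerivAt_id ν).const_sub 1).div_const 2
  have hp : HasDerivAt (fun x : ℝ => (1 + x)/2) (1/2 : ℝ) ν := by
    simpa using ((hasDerivAt_id ν).const_add 1).div_const 2
  have hs : HasDerivAt
      (fun x : ℝ => ∑ j ∈ Finset.range (K+1), ((K + j).choose j : ℝ) * ((1 + x)/2)^j)
      (∑ j ∈ Finset.range (K+1), ((K + j).choose j : ℝ) * ((j:ℝ) * ((1 + ν)/2)^(j-1) * (1/2))) ν :=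
    HasDerivAt.fun_sum fun j _ => (hp.pow j).const_mul _
  have h := (hq.fun_pow (K+1)).fun_mul hs
  unfold stmt17Faux
  convert h using 1
  · rfl
  · rfl
  simp only [Nat.add_sub_cancel]
  have hsum : ∑ j ∈ Finset.range (K+1), ((K + j).choose j : ℝ) * ((j:ℝ) * ((1 + ν)/2)^(j-1) * (1/2))
      = (1/2) * (((K:ℝ)+1) * ∑ i ∈ Finset.range K, ((K + 1 + i).choose i : ℝ) * ((1+ν)/2) ^ i) := by
    rw [← stmt17_reindex K ((1+ν)/2), Finset.mul_sum]
    exact Finset.sum_congr rfl fun j _ => by ring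
  rw [hsum]
  have hkey := stmt17_key_ident K ((1+ν)/2) K
  have hq' : (1 : ℝ) - (1+ν)/2 = (1-ν)/2 := by ring
  rw [hq'] at hkey
  rw [Finset.sum_range_succ]
  rw [show K + 1 + K = 2*K + 1 from by ring] at hkey
  rw [pow_succ]
  push_cast
  linear_combination (-(((K:ℝ)+1)/2) * ((1-ν)/2)^K) * hkey

lemma stmt17_F_anti (K : ℕ) : StrictAntiOn (stmt17Faux K) (Set.Icc (0:ℝ) 1) := by
  apply strictAntiOn_of_deriv_neg (convex_Icc 0 1)
  · have : Continuous (stmt17Faux K) := by unfold stmt17Faux; fun_prop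
    exact this.continuousOn
  · intro x hx
    rw [interior_Icc] at hx
    rw [(stmt17_hasDerivAt_F K x).deriv]
    have h1 : (0:ℝ) < (1 - x)/2 := by linarith [hx.2]
    have h2 : (0:ℝ) < (1 + x)/2 := by linarith [hx.1]
    have hd : (0:ℝ) < ((2*K+1).choose K : ℝ) := by
      exact_mod_cast Nat.choose_pos (by omega)
    have hK : (0:ℝ) < ((K:ℝ)+1)/2 := by positivity
    have := mul_pos (mul_pos (mul_pos hK (pow_pos h1 K)) hd) (pow_pos h2 K)
    linarith [this]

lemma stmt17_F_zero (K : ℕ) : stmt17Faux K 0 = 1/2 := by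
  unfold stmt17Faux
  norm_num
  rw [stmt17_half_ident K]
  rw [pow_succ, mul_right_comm, ← mul_pow]
  norm_num

theorem stmt17 (SNR : ℝ) (hSNR : 0 < SNR) (L : ℕ) (hL : 1 ≤ L) :
    (∀ f₁ f₂ : ℝ, 0 < f₁ → f₁ < f₂ → epsFb SNR L f₂ < epsFb SNR L f₁) ∧
    (∀ f : ℝ, 0 < f → 0 < epsFb SNR L f ∧ epsFb SNR L f < 1 / 2) := by
  obtain ⟨K, rfl⟩ : ∃ K, L = K + 1 := ⟨L - 1, by omega⟩
  set N : ℝ → ℝ := fun f =>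
    Real.sqrt ((f / ((K+1 : ℕ) : ℝ) * SNR) / (1 + f / ((K+1 : ℕ) : ℝ) * SNR)) with hN
  have hrep : ∀ f : ℝ, epsFb SNR (K+1) f = stmt17Faux K (N f) := by
    intro f
    simp only [epsFb, stmt17Faux, Nat.add_sub_cancel, hN]
  have hcast : (0:ℝ) < ((K+1 : ℕ) : ℝ) := by exact_mod_cast Nat.succ_pos K
  have hγpos : ∀ f : ℝ, 0 < f → 0 < f / ((K+1 : ℕ) : ℝ) * SNR := by
    intro f hf
    exact mul_pos (div_pos hf hcast) hSNR
  have hNmem : ∀ f : ℝ, 0 < f → N f ∈ Set.Ioo (0:ℝ) 1 := by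
    intro f hf
    set γ := f / ((K+1 : ℕ) : ℝ) * SNR with hγ
    have hγ0 : 0 < γ := hγpos f hf
    have ht0 : 0 < γ / (1 + γ) := div_pos hγ0 (by linarith)
    have ht1 : γ / (1 + γ) < 1 := (div_lt_one (by linarith)).mpr (by linarith)
    constructor
    · exact Real.sqrt_pos.mpr ht0
    · have := Real.sqrt_lt_sqrt ht0.le ht1
      simpa using this
  have hNmono : ∀ f₁ f₂ : ℝ, 0 < f₁ → f₁ < f₂ → N f₁ < N f₂ := by
    intro f₁ f₂ hf₁ h12
    set γ₁ := f₁ / ((K+1 : ℕ) : ℝ) * SNR with hγ₁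
    set γ₂ := f₂ / ((K+1 : ℕ) : ℝ) * SNR with hγ₂
    have hγ10 : 0 < γ₁ := hγpos f₁ hf₁
    have hγ20 : 0 < γ₂ := hγpos f₂ (lt_trans hf₁ h12)
    have hγlt : γ₁ < γ₂ := by
      rw [hγ₁, hγ₂]; gcongr
    have ht : γ₁ / (1 + γ₁) < γ₂ / (1 + γ₂) := by
      rw [div_lt_div_iff₀ (by linarith) (by linarith)]
      nlinarith
    have ht0 : 0 ≤ γ₁ / (1 + γ₁) := le_of_lt (div_pos hγ10 (by linarith))
    exact Real.sqrt_lt_sqrt ht0 ht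
  constructor
  · intro f₁ f₂ hf₁ h12
    rw [hrep, hrep]
    have h₁ := hNmem f₁ hf₁
    have h₂ := hNmem f₂ (lt_trans hf₁ h12)
    exact stmt17_F_anti K ⟨h₁.1.le, h₁.2.le⟩ ⟨h₂.1.le, h₂.2.le⟩ (hNmono f₁ f₂ hf₁ h12)
  · intro f hf
    rw [hrep]
    have hmem := hNmem f hf
    constructor
    · unfold stmt17Faux
      apply mul_pos (pow_pos (by linarith [hmem.2] : (0:ℝ) < (1 - N f)/2) (K+1))
      apply Finset.sum_pos
      · intro j _
        apply mul_pos
        · exact_mod_cast Nat.choose_pos (Nat.le_add_left j K)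
        · exact pow_pos (by linarith [hmem.1]) j
      · exact ⟨0, Finset.mem_range.mpr (Nat.succ_pos K)⟩
    · have := stmt17_F_anti K (Set.left_mem_Icc.mpr zero_le_one)
        ⟨hmem.1.le, hmem.2.le⟩ hmem.1
      rw [stmt17_F_zero] at this
      exact this
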